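/- arXiv:1702.03606 — 2 statements merged into one kernel-verified Lean document; each statement's English description precedes it below -/
import Mathlib

section
/- If x is a simplex of dimension d in a finite abstract simplicial complex G, then the stable sphere S^-(x) in the Barycentric refinement G_1, namely the graph on all proper nonempty subsets of x with adjacency given by proper inclusion, is a (d−1)-sphere in the sense of Evako. -/
/-- The Zykov join of two finite simple graphs: take the disjoint union of the
vertex sets, keep all edges of both graphs, and connect every vertex of the
first graph with every vertex of the second graph. -/
def zykovJoin {V W : Type} (G : SimpleGraph V) (H : SimpleGraph W) :
    SimpleGraph (V ⊕ W) where
  Adj x y :=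
    match x, y with
    | Sum.inl a, Sum.inl b => G.Adj a b
    | Sum.inr a, Sum.inr b => H.Adj a b
    | _, _ => True
  symm := by
    refine ⟨?_⟩
    intro x y h
    cases x <;> cases y
    · exact G.adj_symm h
    · trivial
    · trivial
    · exact H.adj_symm h
  loopless := by
    refine ⟨?_⟩
    intro x
    cases x
    · exact G.irrefl
    · exact H.irrefl

/-- A finite abstract simplicial complex on a vertex type `α`: a finite set of
nonempty finite sets (simplices) closed under taking nonempty subsets. -/
def IsSimplicialComplex {α : Type} [DecidableEq α] (K : Finset (Finset α)) : Prop :=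
  (∀ s ∈ K, s.Nonempty) ∧ ∀ s ∈ K, ∀ t ⊆ s, t.Nonempty → t ∈ K

/-- The Barycentric refinement of a finite abstract simplicial complex `K`:
the graph whose vertices are the simplices of `K`, two simplices being
adjacent iff one is a proper subset of the other. -/
def barycentric {α : Type} [DecidableEq α] (K : Finset (Finset α)) :
    SimpleGraph {s : Finset α // s ∈ K} where
  Adj x y := x.1 ⊂ y.1 ∨ y.1 ⊂ x.1
  symm := by refine ⟨?_⟩; intro x y h; tauto
  loopless := by refine ⟨?_⟩; intro x h; rcases h with h | h <;> exact (lt_irrefl _ h)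

/-- A finite simple graph is contractible (in the inductive sense of Ivashchenko)
if it is the one-point graph, or if it has a vertex `v` whose unit sphere
(induced subgraph on the neighbors of `v`) and whose removal are both
contractible. -/
inductive GraphContractible : ∀ {V : Type}, SimpleGraph V → Prop
  | point {V : Type} (G : SimpleGraph V) (h : ∃ v : V, ∀ w : V, w = v) :
      GraphContractible G
  | step {V : Type} (G : SimpleGraph V) (v : V)
      (h1 : GraphContractible (G.induce (G.neighborSet v)))
      (h2 : GraphContractible (G.induce {w : V | w ≠ v})) :
      GraphContractible G

/-- Evako `d`-spheres, defined inductively: the empty graph is the unique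
`(-1)`-sphere; a graph is a `d`-sphere if every unit sphere in it is a
`(d-1)`-sphere and removing some vertex leaves a contractible graph. -/
inductive EvakoSphere : ∀ {V : Type}, SimpleGraph V → ℤ → Prop
  | empty {V : Type} (G : SimpleGraph V) (h : IsEmpty V) : EvakoSphere G (-1)
  | step {V : Type} (G : SimpleGraph V) (d : ℤ)
      (hS : ∀ v : V, EvakoSphere (G.induce (G.neighborSet v)) (d - 1))
      (hv : ∃ v : V, GraphContractible (G.induce {w : V | w ≠ v})) :
      EvakoSphere G d

/-- restriction of a graph iso to neighborhoods -/
def isoNbhd {V W : Type} {G : SimpleGraph V} {H : SimpleGraph W} (e : G ≃g H) (v : V) :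
    (G.induce (G.neighborSet v)) ≃g (H.induce (H.neighborSet (e v))) where
  toEquiv := Equiv.subtypeEquiv e.toEquiv (by
    intro a
    simp only [SimpleGraph.mem_neighborSet]
    exact (e.map_adj_iff (v := v) (w := a)).symm)
  map_rel_iff' := by
    intro a b
    exact e.map_adj_iff

/-- restriction of a graph iso to vertex deletion -/
def isoDel {V W : Type} {G : SimpleGraph V} {H : SimpleGraph W} (e : G ≃g H) (v : V) :
    (G.induce {w : V | w ≠ v}) ≃g (H.induce {w : W | w ≠ e v}) where
  toEquiv := Equiv.subtypeEquiv e.toEquiv (by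
    intro a
    show (a ≠ v) ↔ (e.toEquiv a ≠ e.toEquiv v)
    exact not_congr e.toEquiv.apply_eq_iff_eq.symm)
  map_rel_iff' := by
    intro a b
    exact e.map_adj_iff

theorem contractible_map : ∀ {V : Type} {G : SimpleGraph V}, GraphContractible G →
    ∀ {W : Type} (H : SimpleGraph W), (G ≃g H) → GraphContractible H := by
  intro V G hG
  induction hG with
  | point G h =>
    intro W H e
    obtain ⟨v, hv⟩ := h
    exact GraphContractible.point H ⟨e v, fun w => by
      have := hv (e.symm w); rw [← this]; simp⟩
  | step G v h1 h2 ih1 ih2 =>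
    intro W H e
    exact GraphContractible.step H (e v) (ih1 _ (isoNbhd e v)) (ih2 _ (isoDel e v))

theorem sphere_map : ∀ {V : Type} {G : SimpleGraph V} {d : ℤ}, EvakoSphere G d →
    ∀ {W : Type} (H : SimpleGraph W), (G ≃g H) → EvakoSphere H d := by
  intro V G d hG
  induction hG with
  | empty G h =>
    intro W H e
    exact EvakoSphere.empty H (Function.isEmpty e.symm.toFun)
  | step G d hS hv ih =>
    intro W H e
    refine EvakoSphere.step H d (fun w => ?_) ?_
    · have := ih (e.symm w) _ (isoNbhd e (e.symm w))
      rwa [RelIso.apply_symm_apply] at this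
    · obtain ⟨v, hv⟩ := hv
      exact ⟨e v, contractible_map hv _ (isoDel e v)⟩

/-- a graph with an apex vertex adjacent to all others is contractible -/
theorem coneContractibleAux : ∀ (n : ℕ) {V : Type} [Finite V] (G : SimpleGraph V) (v : V),
    Nat.card V ≤ n → (∀ w, w ≠ v → G.Adj v w) → GraphContractible G := by
  intro n
  induction n with
  | zero =>
    intro V _ G v hcard _
    have : Nonempty V := ⟨v⟩
    have : 0 < Nat.card V := Nat.card_pos
    omega
  | succ n ih =>
    intro V _ G v hcard h
    by_cases hall : ∀ w : V, w = v
    · exact GraphContractible.point G ⟨v, hall⟩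
    · push_neg at hall
      obtain ⟨w, hw⟩ := hall
      have hFin : Fintype V := Fintype.ofFinite V
      have cardlt : ∀ (p : V → Prop) (x : V), (¬ p x) → Nat.card {u // p u} ≤ n := by
        intro p x hp
        classical
        have h1 : Fintype.card {u // p u} < Fintype.card V := Fintype.card_subtype_lt hp
        have h2 : Nat.card V = Fintype.card V := Nat.card_eq_fintype_card
        have h3 : Nat.card {u // p u} = Fintype.card {u // p u} := Nat.card_eq_fintype_card
        omega
      refine GraphContractible.step G w ?_ ?_
      · -- sphere of w : cone with apex v
        have hv : v ∈ G.neighborSet w := (h w hw).symm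
        refine ih (G.induce (G.neighborSet w)) ⟨v, hv⟩ ?_ ?_
        · exact cardlt _ w (by simp [SimpleGraph.mem_neighborSet])
        · rintro ⟨u, hu⟩ hne
          have : u ≠ v := fun h' => hne (Subtype.ext h')
          exact (h u this).symm.symm
      · refine ih (G.induce {u | u ≠ w}) ⟨v, fun h' => hw h'.symm⟩ ?_ ?_
        · exact cardlt _ w (fun h' => h' rfl)
        · rintro ⟨u, hu⟩ hne
          have : u ≠ v := fun h' => hne (Subtype.ext h')
          exact h u this

theorem coneContractible {V : Type} [Finite V] (G : SimpleGraph V) (v : V)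
    (h : ∀ w, w ≠ v → G.Adj v w) : GraphContractible G :=
  coneContractibleAux (Nat.card V) G v le_rfl h

/-- the inclusion graph on all finsets -/
def incl {α : Type} : SimpleGraph (Finset α) where
  Adj s t := s ⊂ t ∨ t ⊂ s
  symm := by refine ⟨?_⟩; intro s t h; tauto
  loopless := by refine ⟨?_⟩; intro s h; rcases h with h | h <;> exact (lt_irrefl _ h)

/-- link of a vertex in an induced subgraph, as an induced subgraph -/
def nbhdIso {V : Type} (G : SimpleGraph V) (S : Set V) (v : ↥S) :
    ((G.induce S).induce ((G.induce S).neighborSet v)) ≃g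
      (G.induce {u | u ∈ S ∧ G.Adj v.1 u}) where
  toEquiv :=
  { toFun := fun w => ⟨w.1.1, w.1.2, w.2⟩
    invFun := fun u => ⟨⟨u.1, u.2.1⟩, u.2.2⟩
    left_inv := fun w => rfl
    right_inv := fun u => rfl }
  map_rel_iff' := Iff.rfl

/-- deletion of a vertex in an induced subgraph, as an induced subgraph -/
def delIso {V : Type} (G : SimpleGraph V) (S : Set V) (v : ↥S) :
    ((G.induce S).induce {w | w ≠ v}) ≃g
      (G.induce {u | u ∈ S ∧ u ≠ v.1}) where
  toEquiv :=
  { toFun := fun w => ⟨w.1.1, w.1.2, fun h => w.2 (Subtype.ext h)⟩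
    invFun := fun u => ⟨⟨u.1, u.2.1⟩, fun h => u.2.2 (congrArg Subtype.val h)⟩
    left_inv := fun w => rfl
    right_inv := fun u => rfl }
  map_rel_iff' := Iff.rfl

def chainSet {α : Type} (b : ℕ → Finset α) (k : ℕ) : Set (Finset α) :=
  {u | ∃ j, j < k ∧ b j ⊂ u ∧ u ⊂ b (j+1)}

theorem chain_mono {α : Type} {b : ℕ → Finset α} {k : ℕ}
    (hb : ∀ j, j < k → b j ⊂ b (j+1)) :
    ∀ l m, l ≤ m → m ≤ k → b l ⊆ b m := by
  intro l m hlm hmk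
  induction m with
  | zero =>
    have : l = 0 := by omega
    subst this; rfl
  | succ m ih =>
    rcases Nat.lt_or_ge l (m+1) with h | h
    · exact (ih (by omega) (by omega)).trans (hb m (by omega)).subset
    · have : l = m + 1 := by omega
      subst this; rfl

theorem chainSet_finite {α : Type} {b : ℕ → Finset α} {k : ℕ}
    (hb : ∀ j, j < k → b j ⊂ b (j+1)) (S : Set (Finset α))
    (hS : ∀ u ∈ S, u ∈ chainSet b k) : S.Finite := by
  apply Set.Finite.subset ((b k).powerset.finite_toSet)
  intro u hu
  obtain ⟨j, hj, h1, h2⟩ := hS u hu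
  simp only [Finset.coe_powerset, Set.mem_preimage, Set.mem_powerset_iff,
    Finset.coe_subset]
  exact h2.subset.trans (chain_mono hb (j+1) k (by omega) le_rfl)

section Del

variable {α : Type} [DecidableEq α]

theorem delBase (k : ℕ) (b : ℕ → Finset α) (hb : ∀ j, j < k → b j ⊂ b (j+1))
    (i : ℕ) (hik : i < k) (p : α) (hp : p ∈ b (i+1)) (hpi : p ∉ b i)
    (E : Finset (Finset α))
    (hE1 : ∀ t ∈ E, b i ⊂ t ∧ t ⊂ b (i+1) ∧ p ∉ t)
    (hEF : b (i+1) \ {p} ∈ E)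
    (hF : ∀ u, b i ⊂ u → u ⊂ b (i+1) → p ∉ u → u ∈ E) :
    GraphContractible (incl.induce {u | u ∈ chainSet b k ∧ u ∉ E}) := by
  have hfin : Finite ↥{u | u ∈ chainSet b k ∧ u ∉ E} :=
    (chainSet_finite hb _ (fun u hu => hu.1)).to_subtype
  -- the apex
  have hm2 : b i ⊂ b (i+1) \ {p} := (hE1 _ hEF).1
  obtain ⟨q, hq1, hq2⟩ := Finset.exists_of_ssubset hm2
  have hqp : q ≠ p := by
    intro h; subst h; simp at hq1
  have hqx : q ∈ b (i+1) := (Finset.mem_sdiff.mp hq1).1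
  have apexSub : insert p (b i) ⊆ b (i+1) :=
    Finset.insert_subset hp (hb i hik).subset
  have apexSS : insert p (b i) ⊂ b (i+1) := by
    rw [Finset.ssubset_iff_of_subset apexSub]
    exact ⟨q, hqx, by simp [hqp, hq2]⟩
  have apexMem : insert p (b i) ∈ chainSet b k :=
    ⟨i, hik, Finset.ssubset_insert hpi, apexSS⟩
  have apexE : insert p (b i) ∉ E := by
    intro h
    exact (hE1 _ h).2.2 (Finset.mem_insert_self p _)
  apply coneContractible _ (⟨insert p (b i), apexMem, apexE⟩ :
      ↥{u | u ∈ chainSet b k ∧ u ∉ E})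
  rintro ⟨u, ⟨j, hj, h1, h2⟩, huE⟩ hne
  have hneval : u ≠ insert p (b i) := fun h => hne (Subtype.ext h)
  show incl.Adj (insert p (b i)) u
  rcases lt_trichotomy j i with hji | hji | hji
  · -- u below
    right
    exact lt_of_lt_of_le h2 ((chain_mono hb (j+1) i (by omega) (by omega)).trans
      (Finset.subset_insert p (b i)))
  · -- same interval: u must contain p
    subst hji
    have hpu : p ∈ u := by
      by_contra hpu
      exact huE (hF u h1 h2 hpu)
    left
    exact lt_of_le_of_ne (Finset.insert_subset hpu h1.subset) (fun h => hneval h.symm)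
  · -- u above
    left
    exact lt_of_le_of_lt (apexSub.trans (chain_mono hb (i+1) j (by omega) (by omega))) h1

theorem delContractible : ∀ (n : ℕ)
    (k : ℕ) (b : ℕ → Finset α) (hb : ∀ j, j < k → b j ⊂ b (j+1))
    (i : ℕ) (hik : i < k) (p : α) (hp : p ∈ b (i+1)) (hpi : p ∉ b i)
    (E : Finset (Finset α))
    (hE1 : ∀ t ∈ E, b i ⊂ t ∧ t ⊂ b (i+1) ∧ p ∉ t)
    (hE2 : ∀ t ∈ E, ∀ u, t ⊂ u → u ⊂ b (i+1) → p ∉ u → u ∈ E)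
    (hEF : b (i+1) \ {p} ∈ E)
    (hn : ((b (i+1)).powerset.filter
      (fun t => b i ⊂ t ∧ t ⊂ b (i+1) ∧ p ∉ t ∧ t ∉ E)).card ≤ n),
    GraphContractible (incl.induce {u | u ∈ chainSet b k ∧ u ∉ E}) := by
  intro n
  induction n with
  | zero =>
    intro k b hb i hik p hp hpi E hE1 hE2 hEF hn
    apply delBase k b hb i hik p hp hpi E hE1 hEF
    intro u h1 h2 hpu
    by_contra huE
    have : u ∈ (b (i+1)).powerset.filter
        (fun t => b i ⊂ t ∧ t ⊂ b (i+1) ∧ p ∉ t ∧ t ∉ E) := by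
      simp only [Finset.mem_filter, Finset.mem_powerset]
      exact ⟨h2.subset, h1, h2, hpu, huE⟩
    have := Finset.card_pos.mpr ⟨u, this⟩
    omega
  | succ n ih =>
    intro k b hb i hik p hp hpi E hE1 hE2 hEF hn
    set F := (b (i+1)).powerset.filter
      (fun t => b i ⊂ t ∧ t ⊂ b (i+1) ∧ p ∉ t ∧ t ∉ E) with hFdef
    rcases Finset.eq_empty_or_nonempty F with hFe | hFne
    · apply delBase k b hb i hik p hp hpi E hE1 hEF
      intro u h1 h2 hpu
      by_contra huE
      have : u ∈ F := by
        simp only [hFdef, Finset.mem_filter, Finset.mem_powerset]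
        exact ⟨h2.subset, h1, h2, hpu, huE⟩
      simp [hFe] at this
    · obtain ⟨t0, ht0F, hmax⟩ := F.exists_max_image Finset.card hFne
      have ht0 : b i ⊂ t0 ∧ t0 ⊂ b (i+1) ∧ p ∉ t0 ∧ t0 ∉ E := by
        have := ht0F
        simp only [hFdef, Finset.mem_filter, Finset.mem_powerset] at this
        exact this.2
      obtain ⟨ht01, ht02, ht0p, ht0E⟩ := ht0
      set S : Set (Finset α) := {u | u ∈ chainSet b k ∧ u ∉ E} with hSdef
      have hfin : Finite ↥S := (chainSet_finite hb _ (fun u hu => hu.1)).to_subtype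
      have hv0S : t0 ∈ S := ⟨⟨i, hik, ht01, ht02⟩, ht0E⟩
      set v0 : ↥S := ⟨t0, hv0S⟩ with hv0def
      -- maximality in usable form
      have hmax' : ∀ u, t0 ⊂ u → u ⊂ b (i+1) → p ∉ u → u ∈ E := by
        intro u hu1 hu2 hup
        by_contra huE
        have huF : u ∈ F := by
          simp only [hFdef, Finset.mem_filter, Finset.mem_powerset]
          exact ⟨hu2.subset, ht01.trans hu1, hu2, hup, huE⟩
        have := hmax u huF
        have := Finset.card_lt_card hu1
        omega
      apply GraphContractible.step _ v0
      · -- the link is a cone with apex insert p t0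
        apply contractible_map ?_ _ ((nbhdIso incl S v0).symm)
        have hfinT : Finite ↥{u | u ∈ S ∧ incl.Adj v0.1 u} :=
          (chainSet_finite hb _ (fun u hu => hu.1.1)).to_subtype
        -- apex membership
        have hw0chain : insert p t0 ∈ chainSet b k := by
          refine ⟨i, hik, lt_of_lt_of_le ht01 (Finset.subset_insert p t0), ?_⟩
          have hsub : insert p t0 ⊆ b (i+1) := Finset.insert_subset hp ht02.subset
          rw [Finset.ssubset_iff_of_subset hsub]
          have ht0ne : t0 ≠ b (i+1) \ {p} := fun h => ht0E (h ▸ hEF)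
          have ht0sub : t0 ⊆ b (i+1) \ {p} := by
            rw [Finset.subset_sdiff]
            exact ⟨ht02.subset, by simp [ht0p]⟩
          obtain ⟨q, hq1, hq2⟩ := Finset.exists_of_ssubset (lt_of_le_of_ne ht0sub ht0ne)
          rw [Finset.mem_sdiff, Finset.mem_singleton] at hq1
          exact ⟨q, hq1.1, by simp [hq1.2, hq2]⟩
        have hw0E : insert p t0 ∉ E := fun h => (hE1 _ h).2.2 (Finset.mem_insert_self p _)
        have hw0adj : incl.Adj t0 (insert p t0) := Or.inl (Finset.ssubset_insert ht0p)
        apply coneContractible _ (⟨insert p t0, ⟨hw0chain, hw0E⟩, hw0adj⟩ :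
          ↥{u | u ∈ S ∧ incl.Adj v0.1 u})
        rintro ⟨u, ⟨⟨⟨j, hj, h1, h2⟩, huE⟩, hadj⟩⟩ hne
        have hneval : u ≠ insert p t0 := fun h => hne (Subtype.ext h)
        show incl.Adj (insert p t0) u
        rcases hadj with hadj | hadj
        · -- t0 ⊂ u : u is above
          rcases lt_trichotomy j i with hji | hji | hji
          · exfalso
            have : u ⊆ b i := h2.subset.trans (chain_mono hb (j+1) i (by omega) (by omega))
            exact (lt_irrefl t0) (lt_of_lt_of_le hadj (this.trans ht01.subset))
          · subst hji
            have hpu : p ∈ u := by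
              by_contra hpu
              exact huE (hmax' u hadj h2 hpu)
            left
            exact lt_of_le_of_ne (Finset.insert_subset hpu hadj.subset)
              (fun h => hneval h.symm)
          · left
            have : insert p t0 ⊆ b (i+1) := Finset.insert_subset hp ht02.subset
            exact lt_of_le_of_lt (this.trans (chain_mono hb (i+1) j (by omega) (by omega))) h1
        · -- u ⊂ t0
          right
          exact lt_of_lt_of_le hadj (Finset.subset_insert p t0)
      · -- deletion: apply induction with E' = insert t0 E
        apply contractible_map ?_ _ ((delIso incl S v0).symm)
        have hset : {u | u ∈ S ∧ u ≠ v0.1} = {u | u ∈ chainSet b k ∧ u ∉ insert t0 E} := by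
          ext u
          simp only [Set.mem_setOf_eq, hSdef, Finset.mem_insert]
          tauto
        rw [hset]
        apply ih k b hb i hik p hp hpi (insert t0 E)
        · intro t ht
          rcases Finset.mem_insert.mp ht with h | h
          · subst h; exact ⟨ht01, ht02, ht0p⟩
          · exact hE1 t h
        · intro t ht u hu1 hu2 hup
          rcases Finset.mem_insert.mp ht with h | h
          · subst h
            exact Finset.mem_insert_of_mem (hmax' u hu1 hu2 hup)
          · exact Finset.mem_insert_of_mem (hE2 t h u hu1 hu2 hup)
        · exact Finset.mem_insert_of_mem hEF
        · -- the new filter is contained in F.erase t0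
          have hsub : (b (i+1)).powerset.filter
              (fun t => b i ⊂ t ∧ t ⊂ b (i+1) ∧ p ∉ t ∧ t ∉ insert t0 E) ⊆ F.erase t0 := by
            intro u hu
            simp only [Finset.mem_filter, Finset.mem_powerset, Finset.mem_insert,
              not_or] at hu
            rw [Finset.mem_erase]
            refine ⟨hu.2.2.2.2.1, ?_⟩
            simp only [hFdef, Finset.mem_filter, Finset.mem_powerset]
            exact ⟨hu.1, hu.2.1, hu.2.2.1, hu.2.2.2.1, hu.2.2.2.2.2⟩
          have h1 := Finset.card_le_card hsub
          have h2 := Finset.card_erase_of_mem ht0F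
          omega

end Del

theorem chain_card_low {α : Type} {b : ℕ → Finset α} {k : ℕ}
    (hb : ∀ j, j < k → b j ⊂ b (j+1)) :
    ∀ m, m ≤ k → (b 0).card + m ≤ (b m).card := by
  intro m
  induction m with
  | zero => simp
  | succ m ih =>
    intro hmk
    have h1 := ih (by omega)
    have h2 := Finset.card_lt_card (hb m (by omega))
    omega

theorem chain_card_high {α : Type} {b : ℕ → Finset α} {k : ℕ}
    (hball : ∀ i, i < k → (b (i+1)).card ≤ (b i).card + 1) :
    ∀ m, m ≤ k → (b m).card ≤ (b 0).card + m := by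
  intro m
  induction m with
  | zero => simp
  | succ m ih =>
    intro hmk
    have h1 := ih (by omega)
    have h2 := hball m (by omega)
    omega

theorem chainSphere : ∀ (n : ℕ) {α : Type} [DecidableEq α]
    (k : ℕ) (b : ℕ → Finset α) (hb : ∀ j, j < k → b j ⊂ b (j+1))
    (hcard : (b k).card = (b 0).card + k + n),
    EvakoSphere (incl.induce (chainSet b k)) ((n : ℤ) - 1) := by
  intro n
  induction n with
  | zero =>
    intro α _ k b hb hcard
    have he : IsEmpty ↥(chainSet b k) := by
      constructor
      rintro ⟨u, j, hj, h1, h2⟩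
      have c1 := Finset.card_lt_card h1
      have c2 := Finset.card_lt_card h2
      have c3 := chain_card_low hb j (by omega)
      have c4 : (b (j+1)).card + (k - (j+1)) ≤ (b k).card := by
        have h5 := chain_card_low (b := fun m => b (j+1+m)) (k := k - (j+1))
          (fun l hl => by
            show b (j+1+l) ⊂ b (j+1+(l+1))
            have h' : j+1+(l+1) = (j+1+l)+1 := by omega
            rw [h']
            exact hb (j+1+l) (by omega)) (k - (j+1)) le_rfl
        have e1 : j+1+(k-(j+1)) = k := by omega
        have e2 : j+1+0 = j+1 := by omega
        rw [e1, e2] at h5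
        exact h5
      omega
    have : ((0:ℕ):ℤ) - 1 = -1 := by norm_num
    rw [this]
    exact EvakoSphere.empty _ he
  | succ n ih =>
    intro α _ k b hb hcard
    apply EvakoSphere.step
    · -- links
      rintro ⟨t, j, hj, h1, h2⟩
      set b' : ℕ → Finset α := fun m => if m ≤ j then b m else if m = j+1 then t else b (m-1)
        with hb'def
    -- basic values
      have e0 : b' 0 = b 0 := by simp [hb'def]
      have ej : b' j = b j := by simp [hb'def]
      have ej1 : b' (j+1) = t := by simp [hb'def]
      have etop : b' (k+1) = b k := by
        have h1 : ¬ (k+1 ≤ j) := by omega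
        have h2 : ¬ (k+1 = j+1) := by omega
        have h3 : k ≠ j := by omega
        simp [hb'def, h1, h2, h3]
      have hb' : ∀ m, m < k+1 → b' m ⊂ b' (m+1) := by
        intro m hm
        rcases lt_trichotomy m j with h | h | h
        · have e1 : b' m = b m := by simp [hb'def, Nat.le_of_lt h]
          have e2 : b' (m+1) = b (m+1) := by simp [hb'def, Nat.succ_le_of_lt h]
          rw [e1, e2]; exact hb m (by omega)
        · subst h; rw [ej, ej1]; exact h1
        · rcases Nat.eq_or_lt_of_le h with h' | h'
          · rw [← h', ej1]
            have : b' (j+1+1) = b (j+1) := by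
              have n1 : ¬ (j+2 ≤ j) := by omega
              have n2 : ¬ (j+2 = j+1) := by omega
              simp [hb'def, n1, n2]
            rw [this]; exact h2
          · have e1 : b' m = b (m-1) := by
              have n1 : ¬ (m ≤ j) := by omega
              have n2 : ¬ (m = j+1) := by omega
              simp [hb'def, n1, n2]
            have e2 : b' (m+1) = b m := by
              have n1 : ¬ (m+1 ≤ j) := by omega
              have n2 : ¬ (m+1 = j+1) := by omega
              have : m - 1 + 1 = m := by omega
              have n3 : m ≠ j := by omega
              simp [hb'def, n1, n2, n3, this]
            rw [e1, e2]
            have : m - 1 + 1 = m := by omega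
            rw [← this]
            exact hb (m-1) (by omega)
      have hcard' : (b' (k+1)).card = (b' 0).card + (k+1) + n := by
        rw [etop, e0]
        have ct := Finset.card_lt_card h1
        have ct2 := Finset.card_lt_card h2
        omega
      have bval1 : ∀ m, m ≤ j → b' m = b m := fun m hm => by simp [hb'def, hm]
      have bval3 : ∀ m, j+2 ≤ m → b' m = b (m-1) := fun m hm => by
        have n1 : ¬ (m ≤ j) := by omega
        have n2 : ¬ (m = j+1) := by omega
        simp [hb'def, n1, n2]
      have hseteq : {u | u ∈ chainSet b k ∧ incl.Adj t u} = chainSet b' (k+1) := by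
        ext u
        simp only [Set.mem_setOf_eq]
        constructor
        · rintro ⟨⟨j', hj', g1, g2⟩, hadj⟩
          rcases lt_trichotomy j' j with hji | hji | hji
          · refine ⟨j', by omega, ?_, ?_⟩
            · rw [bval1 j' (by omega)]; exact g1
            · rw [bval1 (j'+1) (by omega)]; exact g2
          · subst hji
            rcases hadj with hadj | hadj
            · refine ⟨j'+1, by omega, ?_, ?_⟩
              · rw [ej1]; exact hadj
              · have e : b' (j'+2) = b (j'+1) := by
                  rw [bval3 (j'+2) (by omega)]
                  have : j'+2-1 = j'+1 := by omega
                  rw [this]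
                show u ⊂ b' (j'+1+1)
                rw [e]; exact g2
            · refine ⟨j', by omega, ?_, ?_⟩
              · rw [bval1 j' le_rfl]; exact g1
              · rw [ej1]; exact hadj
          · refine ⟨j'+1, by omega, ?_, ?_⟩
            · have e : b' (j'+1) = b j' := by
                rw [bval3 (j'+1) (by omega)]
                have : j'+1-1 = j' := by omega
                rw [this]
              rw [e]; exact g1
            · have e : b' (j'+2) = b (j'+1) := by
                rw [bval3 (j'+2) (by omega)]
                have : j'+2-1 = j'+1 := by omega
                rw [this]
              show u ⊂ b' (j'+1+1)
              rw [e]; exact g2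
        · rintro ⟨m, hm, g1, g2⟩
          rcases lt_trichotomy m j with hmj | hmj | hmj
          · rw [bval1 m (by omega)] at g1
            rw [bval1 (m+1) (by omega)] at g2
            refine ⟨⟨m, by omega, g1, g2⟩, Or.inr ?_⟩
            exact lt_of_lt_of_le g2 ((chain_mono hb (m+1) j (by omega) (by omega)).trans
              h1.subset)
          · subst hmj
            rw [bval1 m le_rfl] at g1
            rw [ej1] at g2
            exact ⟨⟨m, by omega, g1, g2.trans h2⟩, Or.inr g2⟩
          · rcases Nat.eq_or_lt_of_le hmj with hmj' | hmj'
            · have e2 : b' (m+1) = b m := by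
                rw [bval3 (m+1) (by omega)]
                have : m+1-1 = m := by omega
                rw [this]
              rw [← hmj', ej1] at g1
              rw [e2, ← hmj'] at g2
              exact ⟨⟨j, by omega, h1.trans g1, g2⟩, Or.inl g1⟩
            · have e1 : b' m = b (m-1) := bval3 m (by omega)
              have e2 : b' (m+1) = b m := by
                rw [bval3 (m+1) (by omega)]
                have : m+1-1 = m := by omega
                rw [this]
              rw [e1] at g1
              rw [e2] at g2
              have hmem : u ∈ chainSet b k := by
                refine ⟨m-1, by omega, g1, ?_⟩
                have : m-1+1 = m := by omega
                rw [this]; exact g2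
              refine ⟨hmem, Or.inl ?_⟩
              exact lt_trans (lt_of_lt_of_le h2
                (chain_mono hb (j+1) (m-1) (by omega) (by omega))) g1
      have hsph := ih (k+1) b' hb' hcard'
      rw [← hseteq] at hsph
      have hres := sphere_map hsph _
        ((nbhdIso incl (chainSet b k) ⟨t, ⟨j, hj, h1, h2⟩⟩).symm)
      have hd : ((n:ℤ)) - 1 = ((n+1:ℕ):ℤ) - 1 - 1 := by push_cast; ring
      rw [← hd]
      exact hres
    · -- removal of a vertex leaves a contractible graph
      have hex : ∃ i, i < k ∧ (b i).card + 2 ≤ (b (i+1)).card := by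
        by_contra hcon
        push_neg at hcon
        have := chain_card_high (b := b) (k := k) (fun i hi => by have := hcon i hi; omega) k le_rfl
        omega
      obtain ⟨i, hik, hc2⟩ := hex
      obtain ⟨p, hp', hpnb⟩ := Finset.exists_of_ssubset (hb i hik)
      set v : Finset α := b (i+1) \ {p} with hvdef
      have hdiff2 : 2 ≤ (b (i+1) \ b i).card := by
        rw [Finset.card_sdiff_of_subset (hb i hik).subset]
        omega
      obtain ⟨q, hq, hqp⟩ := Finset.exists_mem_ne (s := b (i+1) \ b i) (by omega) p
      rw [Finset.mem_sdiff] at hq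
      have hpv : p ∉ v := by simp [hvdef]
      have hvsub : b i ⊆ v := by
        rw [hvdef, Finset.subset_sdiff]
        exact ⟨(hb i hik).subset, by simp [hpnb]⟩
      have hqv : q ∈ v := by
        rw [hvdef, Finset.mem_sdiff, Finset.mem_singleton]
        exact ⟨hq.1, hqp⟩
      have hvi : b i ⊂ v := by
        rw [Finset.ssubset_iff_of_subset hvsub]
        exact ⟨q, hqv, hq.2⟩
      have hvx : v ⊂ b (i+1) := by
        rw [hvdef]
        exact Finset.sdiff_ssubset (by simp [hp']) (Finset.singleton_nonempty p)
      have vmem : v ∈ chainSet b k := ⟨i, hik, hvi, hvx⟩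
      refine ⟨⟨v, vmem⟩, ?_⟩
      apply contractible_map ?_ _ ((delIso incl (chainSet b k) ⟨v, vmem⟩).symm)
      have hset : {u | u ∈ chainSet b k ∧ u ≠ v} =
          {u | u ∈ chainSet b k ∧ u ∉ ({v} : Finset (Finset α))} := by
        ext u; simp
      rw [hset]
      apply delContractible _ k b hb i hik p hp' hpnb {v} ?_ ?_
        (Finset.mem_singleton_self v) le_rfl
      · intro s hs
        rw [Finset.mem_singleton] at hs
        subst hs
        exact ⟨hvi, hvx, hpv⟩
      · intro s hs u hu1 hu2 hup
        rw [Finset.mem_singleton] at hs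
        subst hs
        exfalso
        have hcv : v.card = (b (i+1)).card - 1 := by
          rw [hvdef, Finset.card_sdiff_of_subset (by simp [hp'])]
          simp
        have c1 := Finset.card_lt_card hu1
        have c2 := Finset.card_lt_card hu2
        have hbpos : 0 < (b (i+1)).card := Finset.card_pos.mpr ⟨p, hp'⟩
        omega

/-- If `x` is a simplex of dimension `d` (i.e. of cardinality `d+1`) in a
finite abstract simplicial complex `K`, then the stable sphere `S⁻(x)` in the
Barycentric refinement, the graph on all proper nonempty subsets of `x` with
adjacency given by proper inclusion, is an Evako `(d-1)`-sphere. -/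
theorem stable_sphere_is_sphere {α : Type} [DecidableEq α]
    (K : Finset (Finset α)) (hK : IsSimplicialComplex K)
    (x : Finset α) (hx : x ∈ K) (d : ℕ) (hd : x.card = d + 1) :
    EvakoSphere
      ((barycentric K).induce {y : {s : Finset α // s ∈ K} | y.1 ⊂ x})
      ((d : ℤ) - 1) := by
  classical
  set b : ℕ → Finset α := fun m => if m = 0 then (∅ : Finset α) else x with hbdef
  have hb0 : b 0 = ∅ := by simp [hbdef]
  have hb1 : b 1 = x := by simp [hbdef]
  have hxne : x.Nonempty := Finset.card_pos.mp (by omega)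
  have hchain : ∀ u : Finset α, u ∈ chainSet b 1 ↔ (u.Nonempty ∧ u ⊂ x) := by
    intro u
    constructor
    · rintro ⟨j, hj, h1, h2⟩
      have hj0 : j = 0 := by omega
      subst hj0
      rw [hb0] at h1
      rw [show (0:ℕ)+1 = 1 from rfl, hb1] at h2
      exact ⟨Finset.empty_ssubset.mp h1, h2⟩
    · rintro ⟨h1, h2⟩
      refine ⟨0, by omega, ?_, ?_⟩
      · rw [hb0]; exact Finset.empty_ssubset.mpr h1
      · rw [show (0:ℕ)+1 = 1 from rfl, hb1]; exact h2
  have hb : ∀ j, j < 1 → b j ⊂ b (j+1) := by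
    intro j hj
    have hj0 : j = 0 := by omega
    subst hj0
    rw [hb0, show (0:ℕ)+1 = 1 from rfl, hb1]
    exact Finset.empty_ssubset.mpr hxne
  have hcard : (b 1).card = (b 0).card + 1 + d := by
    rw [hb0, hb1]
    simp only [Finset.card_empty]
    omega
  have hsph := chainSphere d 1 b hb hcard
  exact sphere_map hsph _
    { toEquiv :=
      { toFun := fun u => ⟨⟨u.1, hK.2 x hx u.1 (((hchain u.1).mp u.2).2.subset)
          (((hchain u.1).mp u.2).1)⟩, ((hchain u.1).mp u.2).2⟩
        invFun := fun y => ⟨y.1.1, (hchain y.1.1).mpr ⟨hK.1 y.1.1 y.1.2, y.2⟩⟩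
        left_inv := fun u => Subtype.ext rfl
        right_inv := fun y => Subtype.ext (Subtype.ext rfl) }
      map_rel_iff' := Iff.rfl }
end

section
/- The graph product defined on vertex sets V(G)×V(H) by connecting (a,b) and (c,d) iff (a,c) is an edge of G or (b,d) is an edge of H is distributive over the Zykov join: G · (H + K) ≅ G·H + G·K. -/
/-- The large graph product: vertices are pairs, and distinct pairs `(a,b)`,
`(c,d)` are adjacent iff `{a,c}` is an edge of `G` or `{b,d}` is an edge of
`H`. -/
def zykovProd {V W : Type} (G : SimpleGraph V) (H : SimpleGraph W) :
    SimpleGraph (V × W) where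
  Adj x y := x ≠ y ∧ (G.Adj x.1 y.1 ∨ H.Adj x.2 y.2)
  symm := by
    refine ⟨?_⟩
    intro x y h
    exact ⟨h.1.symm, h.2.imp (fun h' => h'.symm) (fun h' => h'.symm)⟩
  loopless := by refine ⟨?_⟩; intro x h; exact h.1 rfl

/-- The graph product is distributive over the Zykov join:
`G · (H + K) ≅ G·H + G·K`. -/
theorem zykovProd_zykovJoin_distrib {V W U : Type}
    (G : SimpleGraph V) (H : SimpleGraph W) (K : SimpleGraph U) :
    Nonempty
      (zykovProd G (zykovJoin H K) ≃g
        zykovJoin (zykovProd G H) (zykovProd G K)) := by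
  refine ⟨⟨Equiv.prodSumDistrib V W U, ?_⟩⟩
  rintro ⟨a, b | b⟩ ⟨c, d | d⟩ <;>
    simp [zykovProd, zykovJoin, Equiv.prodSumDistrib, Prod.ext_iff]
end
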